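/- Let k be a field and let R be the 4×4 matrix over k equal to the identity matrix except that its (2,3) entry is 1 (rows and columns indexed 1,…,4), viewed as an endomorphism of V⊗V for V = k². Then R satisfies the Hopf equation R¹²R²³ = R²³R¹³R¹² in End(V⊗V⊗V) if and only if k has characteristic 2; moreover, when char(k) = 2, R is commutative, i.e. R¹²R¹³ = R¹³R¹². -/

import Mathlib

open TensorProduct LinearMap

section HopfEq

variable (k V : Type*) [Field k] [AddCommGroup V] [Module k V]

/-- The flip map `τ : V ⊗ V → V ⊗ V`, `τ(v ⊗ w) = w ⊗ v`. -/
noncomputable def flipMap : V ⊗[k] V →ₗ[k] V ⊗[k] V :=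
  (TensorProduct.comm k V V).toLinearMap

variable {k V}

/-- `R¹² = R ⊗ I` as an endomorphism of `V ⊗ V ⊗ V`. -/
noncomputable def map12 (R : V ⊗[k] V →ₗ[k] V ⊗[k] V) :
    V ⊗[k] (V ⊗[k] V) →ₗ[k] V ⊗[k] (V ⊗[k] V) :=
  (TensorProduct.assoc k V V V).toLinearMap ∘ₗ R.rTensor V ∘ₗ
    (TensorProduct.assoc k V V V).symm.toLinearMap

/-- `R²³ = I ⊗ R` as an endomorphism of `V ⊗ V ⊗ V`. -/
noncomputable def map23 (R : V ⊗[k] V →ₗ[k] V ⊗[k] V) :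
    V ⊗[k] (V ⊗[k] V) →ₗ[k] V ⊗[k] (V ⊗[k] V) :=
  R.lTensor V

/-- `R¹³ = (I ⊗ τ)(R ⊗ I)(I ⊗ τ)` as an endomorphism of `V ⊗ V ⊗ V`. -/
noncomputable def map13 (R : V ⊗[k] V →ₗ[k] V ⊗[k] V) :
    V ⊗[k] (V ⊗[k] V) →ₗ[k] V ⊗[k] (V ⊗[k] V) :=
  (flipMap k V).lTensor V ∘ₗ map12 R ∘ₗ (flipMap k V).lTensor V

/-- `R` is a solution of the Hopf equation: `R¹²R²³ = R²³R¹³R¹²`. -/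
def IsHopfSolution (R : V ⊗[k] V →ₗ[k] V ⊗[k] V) : Prop :=
  map12 R ∘ₗ map23 R = map23 R ∘ₗ map13 R ∘ₗ map12 R

/-- `R` is a solution of the pentagonal equation: `R¹²R¹³R²³ = R²³R¹²`. -/
def IsPentagonSolution (R : V ⊗[k] V →ₗ[k] V ⊗[k] V) : Prop :=
  map12 R ∘ₗ map13 R ∘ₗ map23 R = map23 R ∘ₗ map12 R

end HopfEq

/-- The standard basis `{v₁ ⊗ v₁, v₁ ⊗ v₂, v₂ ⊗ v₁, v₂ ⊗ v₂}` of `k² ⊗ k²`. -/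
noncomputable def basis19 (k : Type*) [Field k] :
    Module.Basis (Fin 2 × Fin 2) k ((Fin 2 → k) ⊗[k] (Fin 2 → k)) :=
  (Pi.basisFun k (Fin 2)).tensorProduct (Pi.basisFun k (Fin 2))

/-- The endomorphism of `k² ⊗ k²` whose matrix in the ordered basis
`{v₁ ⊗ v₁, v₁ ⊗ v₂, v₂ ⊗ v₁, v₂ ⊗ v₂}` is the identity matrix except that the
`(2,3)` entry is `1`: it fixes all basis vectors except `v₂ ⊗ v₁ ↦ v₂ ⊗ v₁ + v₁ ⊗ v₂`. -/
noncomputable def R19 (k : Type*) [Field k] :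
    (Fin 2 → k) ⊗[k] (Fin 2 → k) →ₗ[k] (Fin 2 → k) ⊗[k] (Fin 2 → k) :=
  (basis19 k).constr k fun p =>
    if p = ((1 : Fin 2), (0 : Fin 2)) then basis19 k (1, 0) + basis19 k (0, 1)
    else basis19 k p


section Aux

variable {k : Type*} [Field k]

private lemma R19_apply_aux (i j : Fin 2) :
    R19 k ((Pi.basisFun k (Fin 2)) i ⊗ₜ[k] (Pi.basisFun k (Fin 2)) j) =
      if (i, j) = ((1 : Fin 2), (0 : Fin 2)) then
        (Pi.basisFun k (Fin 2)) 1 ⊗ₜ[k] (Pi.basisFun k (Fin 2)) 0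
          + (Pi.basisFun k (Fin 2)) 0 ⊗ₜ[k] (Pi.basisFun k (Fin 2)) 1
      else (Pi.basisFun k (Fin 2)) i ⊗ₜ[k] (Pi.basisFun k (Fin 2)) j := by
  have h : (Pi.basisFun k (Fin 2)) i ⊗ₜ[k] (Pi.basisFun k (Fin 2)) j = basis19 k (i, j) := by
    simp [basis19, Module.Basis.tensorProduct_apply']
  rw [h, R19, Module.Basis.constr_basis]
  split <;> simp_all [basis19, Module.Basis.tensorProduct_apply']

private abbrev ee (k : Type*) [Field k] (i : Fin 2) : Fin 2 → k := Pi.single i 1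

private lemma ee_eq (i : Fin 2) : Pi.basisFun k (Fin 2) i = ee k i :=
  funext fun j => by simp [ee, Pi.single_apply, eq_comm]

private lemma R19_00 : R19 k (ee k 0 ⊗ₜ[k] ee k 0) = ee k 0 ⊗ₜ[k] ee k 0 := by
  simpa using R19_apply_aux (k := k) 0 0
private lemma R19_01 : R19 k (ee k 0 ⊗ₜ[k] ee k 1) = ee k 0 ⊗ₜ[k] ee k 1 := by
  simpa using R19_apply_aux (k := k) 0 1
private lemma R19_11 : R19 k (ee k 1 ⊗ₜ[k] ee k 1) = ee k 1 ⊗ₜ[k] ee k 1 := by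
  simpa using R19_apply_aux (k := k) 1 1
private lemma R19_10 : R19 k (ee k 1 ⊗ₜ[k] ee k 0) =
    ee k 1 ⊗ₜ[k] ee k 0 + ee k 0 ⊗ₜ[k] ee k 1 := by
  simpa using R19_apply_aux (k := k) 1 0

set_option maxHeartbeats 2000000 in
set_option synthInstance.maxHeartbeats 400000 in
private lemma R19_comm : map12 (R19 k) ∘ₗ map13 (R19 k) = map13 (R19 k) ∘ₗ map12 (R19 k) := by
  apply ((Pi.basisFun k (Fin 2)).tensorProduct (basis19 k)).ext
  rintro ⟨a, b, c⟩
  fin_cases a <;> fin_cases b <;> fin_cases c <;>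
    simp [Module.Basis.tensorProduct_apply', basis19, map12, map13, map23, flipMap,
      -Pi.basisFun_apply, ee_eq,
      R19_00, R19_01, R19_10, R19_11, tmul_add, add_tmul] <;>
    abel

set_option maxHeartbeats 2000000 in
set_option synthInstance.maxHeartbeats 400000 in
private lemma R19_hopf_of_two (h2 : (2 : k) = 0) : IsHopfSolution (R19 k) := by
  unfold IsHopfSolution
  apply ((Pi.basisFun k (Fin 2)).tensorProduct (basis19 k)).ext
  rintro ⟨a, b, c⟩
  fin_cases a <;> fin_cases b <;> fin_cases c <;>
    simp [Module.Basis.tensorProduct_apply', basis19, map12, map13, map23, flipMap,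
      -Pi.basisFun_apply, ee_eq,
      R19_00, R19_01, R19_10, R19_11, tmul_add, add_tmul]
  all_goals try abel
  all_goals simp [← Nat.cast_smul_eq_nsmul k, ← Int.cast_smul_eq_zsmul k, h2]

set_option maxHeartbeats 2000000 in
set_option synthInstance.maxHeartbeats 400000 in
private lemma two_of_R19_hopf (h : IsHopfSolution (R19 k)) : (2 : k) = 0 := by
  rw [IsHopfSolution] at h
  have h' := LinearMap.congr_fun h (ee k 1 ⊗ₜ[k] (ee k 0 ⊗ₜ[k] ee k 0))
  simp [map12, map13, map23, flipMap, -Pi.basisFun_apply,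
    R19_00, R19_01, R19_10, R19_11, tmul_add, add_tmul] at h'
  abel_nf at h'
  have hz : (2 : ℤ) • (ee k 0 ⊗ₜ[k] (ee k 0 ⊗ₜ[k] ee k 1)) = 0 := by
    have e1 : (2 : ℤ) • (ee k 0 ⊗ₜ[k] (ee k 0 ⊗ₜ[k] ee k 1)) =
        (ee k 1 ⊗ₜ[k] (ee k 0 ⊗ₜ[k] ee k 0) +
          (ee k 0 ⊗ₜ[k] (ee k 1 ⊗ₜ[k] ee k 0) +
            (2 : ℤ) • ee k 0 ⊗ₜ[k] (ee k 0 ⊗ₜ[k] ee k 1))) -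
        (ee k 1 ⊗ₜ[k] (ee k 0 ⊗ₜ[k] ee k 0) + ee k 0 ⊗ₜ[k] (ee k 1 ⊗ₜ[k] ee k 0)) := by
      abel
    rw [e1, ← h', sub_self]
  have hzk : (2 : k) • (ee k 0 ⊗ₜ[k] (ee k 0 ⊗ₜ[k] ee k 1)) = 0 := by
    rw [show (2 : k) = 1 + 1 by norm_num, add_smul, one_smul, ← two_smul ℤ]
    exact hz
  have hne : (ee k 0 ⊗ₜ[k] (ee k 0 ⊗ₜ[k] ee k 1)) ≠ 0 := by
    have hB : ((Pi.basisFun k (Fin 2)).tensorProduct (basis19 k)) (0, (0, 1))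
        = ee k 0 ⊗ₜ[k] (ee k 0 ⊗ₜ[k] ee k 1) := by
      simp [Module.Basis.tensorProduct_apply', basis19, -Pi.basisFun_apply, ee_eq]
    exact hB ▸ Module.Basis.ne_zero _ _
  rcases smul_eq_zero.mp hzk with h0 | h0
  · exact h0
  · exact absurd h0 hne

end Aux
/-- `R19` satisfies the Hopf equation iff `char k = 2`, in which case it is
moreover a commutative solution: `R¹²R¹³ = R¹³R¹²`. -/
theorem R19_isHopfSolution_iff_char_two (k : Type*) [Field k] :
    (IsHopfSolution (R19 k) ↔ ringChar k = 2) ∧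
      (ringChar k = 2 → map12 (R19 k) ∘ₗ map13 (R19 k) = map13 (R19 k) ∘ₗ map12 (R19 k)) := by
  refine ⟨⟨fun h => ?_, fun h => ?_⟩, fun _ => R19_comm⟩
  · have h2 : (2 : k) = 0 := two_of_R19_hopf h
    haveI := ringChar.charP k
    have hd : ringChar k ∣ 2 := (CharP.cast_eq_zero_iff k (ringChar k) 2).mp (by exact_mod_cast h2)
    rcases (Nat.dvd_prime Nat.prime_two).mp hd with h1 | h1
    · exact absurd h1 (CharP.ringChar_ne_one)
    · exact h1
  · haveI : CharP k 2 := h ▸ ringChar.charP k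
    exact R19_hopf_of_two (by exact_mod_cast CharP.cast_eq_zero k 2)
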